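/- Let A_1, …, A_ℓ ∈ ℝ^{m×n}, b_1, …, b_ℓ ∈ ℝ^n, c_1, …, c_ℓ ∈ ℝ, and ε > 0. Let ω > 0 be such that every convex set K ⊆ ℝ^m with lattice width at least ω contains a point of ℤ^m. Let δ > 0 satisfy δ ≤ 1 and δ·‖A_i‖·‖y‖ ≤ ε for all i whenever y ranges over the solutions of D y ≤ e, where D, e define a fixed system of linear inequalities, and set U := {u ∈ ℤ^m \ {0} : 2·δ·‖u‖ < ω}. Suppose there exist x ∈ ℝ^m and y ∈ ℝ^n such that: every component of x is at least 1; D y ≤ e; x^⊤A_i y + b_i^⊤ y ≤ c_i − ε for all i = 1, …, ℓ; and width_u(P(y)) ≥ ω for every u ∈ U. Then there exists x* ∈ ℤ^m with x* ≥ 0 componentwise and (x*)^⊤A_i y + b_i^⊤ y ≤ c_i for all i = 1, …, ℓ; in particular the original mixed-integer bilinear system is satisfiable. -/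

import Mathlib

open scoped BigOperators

/-- The polyhedron `P(y) = { x ∈ ℝ^m : x ≥ 0, xᵀ Aᵢ y + bᵢᵀ y ≤ cᵢ (i = 1..ℓ) }`. -/
def Pset {l m n : ℕ} (A : Fin l → Matrix (Fin m) (Fin n) ℝ)
    (b : Fin l → EuclideanSpace ℝ (Fin n)) (c : Fin l → ℝ)
    (y : EuclideanSpace ℝ (Fin n)) : Set (EuclideanSpace ℝ (Fin m)) :=
  {x | (∀ j, 0 ≤ x j) ∧
    ∀ i, (∑ j, ∑ k, x j * A i j k * y k) + (∑ k, b i k * y k) ≤ c i}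

/-- The operator norm of a matrix with respect to Euclidean norms. -/
noncomputable def matOpNorm {m n : ℕ} (A : Matrix (Fin m) (Fin n) ℝ) : ℝ :=
  ‖LinearMap.toContinuousLinearMap (Matrix.toEuclideanLin A)‖

/-- The width of a set `K ⊆ ℝ^m` with respect to an integer direction `u`:
`width_u(K) = sup { uᵀ(x - y) : x, y ∈ K }`, valued in the extended reals. -/
noncomputable def intWidth {m : ℕ} (u : Fin m → ℤ) (K : Set (EuclideanSpace ℝ (Fin m))) :
    EReal :=
  ⨆ x ∈ K, ⨆ y ∈ K, ((∑ i, (u i : ℝ) * (x i - y i) : ℝ) : EReal)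

/-- Soundness of the relaxation step: if the relaxed system is satisfiable (there are
real `x ≥ 1` and `y` with `D y ≤ e`, all bilinear constraints satisfied with slack `ε`,
and `width_u(P(y)) ≥ ω` for every nonzero integer `u` with `2 δ ‖u‖ < ω`), where `ω` has
the flatness property and `δ ≤ 1` satisfies `δ ‖Aᵢ‖ ‖y‖ ≤ ε` for all feasible `y`, then
the original mixed-integer bilinear system has an integer solution: a nonnegative
`x* ∈ ℤ^m` with `(x*)ᵀ Aᵢ y + bᵢᵀ y ≤ cᵢ` for all `i`. -/
theorem stmt5 {l m n p : ℕ} (A : Fin l → Matrix (Fin m) (Fin n) ℝ)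
    (b : Fin l → EuclideanSpace ℝ (Fin n)) (c : Fin l → ℝ)
    (D : Matrix (Fin p) (Fin n) ℝ) (e : Fin p → ℝ)
    (ε : ℝ) (hε : 0 < ε) (ω : ℝ) (hω : 0 < ω)
    (hflat : ∀ K : Set (EuclideanSpace ℝ (Fin m)), Convex ℝ K →
      (∀ u : Fin m → ℤ, u ≠ 0 → (ω : EReal) ≤ intWidth u K) →
      ∃ z : Fin m → ℤ, (show EuclideanSpace ℝ (Fin m) from WithLp.toLp 2 (fun j => (z j : ℝ))) ∈ K)
    (δ : ℝ) (hδ0 : 0 < δ) (hδ1 : δ ≤ 1)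
    (hδA : ∀ y : EuclideanSpace ℝ (Fin n), (∀ k, ∑ j, D k j * y j ≤ e k) →
      ∀ i, δ * matOpNorm (A i) * ‖y‖ ≤ ε)
    (x : EuclideanSpace ℝ (Fin m)) (y : EuclideanSpace ℝ (Fin n))
    (hx1 : ∀ j, 1 ≤ x j)
    (hDy : ∀ k, ∑ j, D k j * y j ≤ e k)
    (hslack : ∀ i, (∑ j, ∑ k, x j * A i j k * y k) + (∑ k, b i k * y k) ≤ c i - ε)
    (hwidth : ∀ u : Fin m → ℤ, u ≠ 0 →
      2 * δ * Real.sqrt (∑ j, ((u j : ℝ)) ^ 2) < ω →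
      (ω : EReal) ≤ intWidth u (Pset A b c y)) :
    ∃ xstar : Fin m → ℤ, (∀ j, 0 ≤ xstar j) ∧
      ∀ i, (∑ j, ∑ k, (xstar j : ℝ) * A i j k * y k) + (∑ k, b i k * y k) ≤ c i := by
  classical
  set K := Pset A b c y with hKdef
  -- the vector vv i = A i *ᵥ y, as element of EuclideanSpace
  set vv : Fin l → EuclideanSpace ℝ (Fin m) := fun i => WithLp.toLp 2 (fun j => (A i).mulVec y j) with hvv
  have hbil : ∀ (i : Fin l) (w : EuclideanSpace ℝ (Fin m)),
      (∑ j, ∑ k, w j * A i j k * y k) = inner ℝ w (vv i) := by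
    intro i w
    simp [hvv, PiLp.inner_apply, Matrix.mulVec, dotProduct, Finset.mul_sum, mul_assoc]
    refine Finset.sum_congr rfl fun j _ => ?_
    rw [Finset.sum_mul]
    exact Finset.sum_congr rfl fun k _ => by ring
  have hbnd : ∀ i, ‖vv i‖ ≤ matOpNorm (A i) * ‖y‖ := by
    intro i
    have hv : vv i = Matrix.toEuclideanLin (A i) y := by
      ext j
      simp [hvv, Matrix.toEuclideanLin_apply]
    have := (LinearMap.toContinuousLinearMap (Matrix.toEuclideanLin (A i))).le_opNorm y
    simpa [hv, matOpNorm] using this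
  -- membership of perturbed points
  have habs : ∀ (w : EuclideanSpace ℝ (Fin m)) (j : Fin m), |w j| ≤ ‖w‖ := by
    intro w j
    rw [EuclideanSpace.norm_eq, ← Real.sqrt_sq_eq_abs]
    apply Real.sqrt_le_sqrt
    calc w j ^ 2 ≤ ∑ i, w i ^ 2 :=
          Finset.single_le_sum (f := fun i => w i ^ 2) (fun i _ => sq_nonneg _)
            (Finset.mem_univ j)
      _ = ∑ i, ‖w i‖ ^ 2 := by simp [Real.norm_eq_abs, sq_abs]
  have hmem : ∀ w : EuclideanSpace ℝ (Fin m), ‖w‖ ≤ δ → x + w ∈ K := by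
    intro w hw
    constructor
    · intro j
      have h1 := hx1 j
      have h2 : |w j| ≤ ‖w‖ := habs w j
      have h3 : -(w j) ≤ |w j| := neg_le_abs _
      show 0 ≤ x j + w j
      linarith
    · intro i
      have hsplit : (∑ j, ∑ k, (x + w) j * A i j k * y k)
          = (∑ j, ∑ k, x j * A i j k * y k) + inner ℝ w (vv i) := by
        rw [← hbil]
        rw [← Finset.sum_add_distrib]
        refine Finset.sum_congr rfl fun j _ => ?_
        rw [← Finset.sum_add_distrib]
        refine Finset.sum_congr rfl fun k _ => ?_
        show (x j + w j) * A i j k * y k = _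
        ring
      have hCS : inner ℝ w (vv i) ≤ ε := by
        have h1 : inner ℝ w (vv i) ≤ ‖w‖ * ‖vv i‖ := real_inner_le_norm w (vv i)
        have h2 : ‖w‖ * ‖vv i‖ ≤ δ * (matOpNorm (A i) * ‖y‖) := by
          apply mul_le_mul hw (hbnd i) (norm_nonneg _) hδ0.le
        have h3 := hδA y hDy i
        linarith [h2, h3, h1, (mul_assoc δ (matOpNorm (A i)) ‖y‖)]
      have := hslack i
      rw [hsplit]
      linarith
  -- convexity of K
  have hconv : Convex ℝ K := by
    intro x₁ hx₁ x₂ hx₂ a aa ha haa hab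
    constructor
    · intro j
      show 0 ≤ a * x₁ j + aa * x₂ j
      have := hx₁.1 j; have := hx₂.1 j
      positivity
    · intro i
      have hsplit : (∑ j, ∑ k, (a • x₁ + aa • x₂) j * A i j k * y k)
          = a * (∑ j, ∑ k, x₁ j * A i j k * y k)
            + aa * (∑ j, ∑ k, x₂ j * A i j k * y k) := by
        rw [hbil i, inner_add_left, real_inner_smul_left, real_inner_smul_left,
          ← hbil, ← hbil]
      have e1 := hx₁.2 i
      have e2 := hx₂.2 i
      have e1' := mul_le_mul_of_nonneg_left e1 ha
      have e2' := mul_le_mul_of_nonneg_left e2 haa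
      have hcomb : a * c i + aa * c i = c i := by rw [← add_mul, hab, one_mul]
      have hexp : a * ((∑ j, ∑ k, x₁ j * A i j k * y k) + ∑ k, b i k * y k)
          + aa * ((∑ j, ∑ k, x₂ j * A i j k * y k) + ∑ k, b i k * y k)
          = a * (∑ j, ∑ k, x₁ j * A i j k * y k)
            + aa * (∑ j, ∑ k, x₂ j * A i j k * y k)
            + (a + aa) * (∑ k, b i k * y k) := by ring
      rw [hab, one_mul] at hexp
      rw [hsplit]
      linarith
  -- lattice width bound for all nonzero u
  have hwidthAll : ∀ u : Fin m → ℤ, u ≠ 0 → (ω : EReal) ≤ intWidth u K := by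
    intro u hu
    by_cases hcase : 2 * δ * Real.sqrt (∑ j, ((u j : ℝ)) ^ 2) < ω
    · exact hwidth u hu hcase
    · push_neg at hcase
      set uR : EuclideanSpace ℝ (Fin m) := WithLp.toLp 2 (fun j => (u j : ℝ)) with huR
      have hNorm : ‖uR‖ = Real.sqrt (∑ j, ((u j : ℝ)) ^ 2) := by
        rw [EuclideanSpace.norm_eq]
        congr 1
        refine Finset.sum_congr rfl fun j _ => ?_
        simp [huR, Real.norm_eq_abs, sq_abs]
      have hNpos : 0 < ‖uR‖ := by
        rw [norm_pos_iff]
        intro hzero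
        apply hu
        funext j
        have h0 : (u j : ℝ) = 0 := congrArg (fun v : EuclideanSpace ℝ (Fin m) => v j) hzero
        simp only [Pi.zero_apply]
        exact_mod_cast h0
      set N : ℝ := ‖uR‖ with hN
      have hN2 : ‖uR‖ = Real.sqrt (∑ j, ((u j : ℝ)) ^ 2) := hNorm
      set w : EuclideanSpace ℝ (Fin m) := (δ / N) • uR with hwdef
      have hwnorm : ‖w‖ = δ := by
        rw [hwdef, norm_smul, Real.norm_eq_abs, abs_of_pos (div_pos hδ0 hNpos), ← hN]
        field_simp
      have hp1 : x + w ∈ K := hmem w hwnorm.le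
      have hp2 : x + (-w) ∈ K := hmem (-w) (by rw [norm_neg, hwnorm])
      have hsum : (∑ i, (u i : ℝ) * ((x + w) i - (x + (-w)) i)) = 2 * δ * N := by
        have hNsq : (∑ j, ((u j : ℝ)) ^ 2) = N ^ 2 := by
          rw [hNorm, Real.sq_sqrt]
          positivity
        have : (∑ i, (u i : ℝ) * ((x + w) i - (x + (-w)) i))
            = (2 * (δ / N)) * ∑ j, ((u j : ℝ)) ^ 2 := by
          rw [Finset.mul_sum]
          refine Finset.sum_congr rfl fun i _ => ?_
          show (u i : ℝ) * ((x i + (δ / N) * uR i) - (x i + -((δ / N) * uR i))) = _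
          simp [huR]; ring
        rw [this, hNsq]
        field_simp
      have hωle : ω ≤ ∑ i, (u i : ℝ) * ((x + w) i - (x + (-w)) i) := by
        rw [hsum]
        calc ω ≤ 2 * δ * Real.sqrt (∑ j, ((u j : ℝ)) ^ 2) := hcase
          _ = 2 * δ * N := by rw [hNorm]
      calc (ω : EReal) ≤ ((∑ i, (u i : ℝ) * ((x + w) i - (x + (-w)) i) : ℝ) : EReal) := by
            exact_mod_cast hωle
        _ ≤ ⨆ z ∈ K, ((∑ i, (u i : ℝ) * ((x + w) i - z i) : ℝ) : EReal) :=
            le_iSup₂ (f := fun z (_ : z ∈ K) =>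
              ((∑ i, (u i : ℝ) * ((x + w) i - z i) : ℝ) : EReal)) (x + (-w)) hp2
        _ ≤ intWidth u K :=
            le_iSup₂ (f := fun z (_ : z ∈ K) =>
              ⨆ z' ∈ K, ((∑ i, (u i : ℝ) * (z i - z' i) : ℝ) : EReal)) (x + w) hp1
  obtain ⟨z, hz⟩ := hflat K hconv hwidthAll
  refine ⟨z, fun j => ?_, hz.2⟩
  have h : (0 : ℝ) ≤ (z j : ℝ) := hz.1 j
  exact_mod_cast h
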